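/- In ℝ[S_3], setting R = (4/3)·R₁ = (4/3)Q⁻_τ ν Q⁺_τ and J = Q⁺_τ ν Q⁻_τ, the elements Q_J = J·R and Q_R = R·J are self-adjoint idempotents with Q_J·Q_R = 0 = Q_R·Q_J, Q_J·J = J = J·Q_R, Q_R·R = R = R·Q_J, Q_J·C = 0 = C·Q_R, Q⁺_τ·Q_J = Q_J = Q_J·Q⁺_τ, and Q⁻_τ·Q_R = Q_R = Q_R·Q⁻_τ. -/

import Mathlib

noncomputable section

/-- `τ = (1 2)` in `S₃` (on `Fin 3`: swaps `0` and `1`). -/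
def tau3 : Equiv.Perm (Fin 3) := Equiv.swap 0 1

/-- `ν = (1 3)` in `S₃` (on `Fin 3`: swaps `0` and `2`). -/
def nu3 : Equiv.Perm (Fin 3) := Equiv.swap 0 2

/-- `c = (1 2 3)` the 3-cycle in `S₃`. -/
def cyc3 : Equiv.Perm (Fin 3) := finRotate 3

/-- The canonical image of a permutation in the real group algebra `ℝ[S₃]`. -/
def oA (σ : Equiv.Perm (Fin 3)) : MonoidAlgebra ℝ (Equiv.Perm (Fin 3)) :=
  MonoidAlgebra.of ℝ (Equiv.Perm (Fin 3)) σ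

/-- `Q⁺_τ = (1 + τ)/2` in `ℝ[S₃]`. -/
def Qp : MonoidAlgebra ℝ (Equiv.Perm (Fin 3)) := ((1 : ℝ) / 2) • (1 + oA tau3)

/-- `Q⁻_τ = (1 − τ)/2` in `ℝ[S₃]`. -/
def Qm : MonoidAlgebra ℝ (Equiv.Perm (Fin 3)) := ((1 : ℝ) / 2) • (1 - oA tau3)

/-- `C = 1 + c + c²` in `ℝ[S₃]`. -/
def Cel : MonoidAlgebra ℝ (Equiv.Perm (Fin 3)) := 1 + oA cyc3 + oA cyc3 * oA cyc3

/-- `J = Q⁺_τ · ν · Q⁻_τ` in `ℝ[S₃]`. -/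
def Jel : MonoidAlgebra ℝ (Equiv.Perm (Fin 3)) := Qp * oA nu3 * Qm

/-- `R₁ = Q⁻_τ · ν · Q⁺_τ` in `ℝ[S₃]`. -/
def R1el : MonoidAlgebra ℝ (Equiv.Perm (Fin 3)) := Qm * oA nu3 * Qp
/-- `R = (4/3)·R₁` in `ℝ[S₃]`. -/
def RRel : MonoidAlgebra ℝ (Equiv.Perm (Fin 3)) := ((4 : ℝ) / 3) • R1el

/-- `Q_J = J·R` in `ℝ[S₃]`. -/
def QJ : MonoidAlgebra ℝ (Equiv.Perm (Fin 3)) := Jel * RRel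

/-- `Q_R = R·J` in `ℝ[S₃]`. -/
def QR : MonoidAlgebra ℝ (Equiv.Perm (Fin 3)) := RRel * Jel

/-- The star (adjoint) operation on `ℝ[S₃]` induced by inversion in the group. -/
def starA (x : MonoidAlgebra ℝ (Equiv.Perm (Fin 3))) :
    MonoidAlgebra ℝ (Equiv.Perm (Fin 3)) :=
  MonoidAlgebra.ofCoeff (Finsupp.mapDomain (fun σ : Equiv.Perm (Fin 3) => σ⁻¹) x.coeff)


/-! ### Auxiliary machinery for the proof -/

/-- `(2 3)` on `Fin 3`: swaps `1` and `2`. -/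
def mu3 : Equiv.Perm (Fin 3) := Equiv.swap 1 2
/-- `c⁻¹ = c²`. -/
def cs3 : Equiv.Perm (Fin 3) := cyc3⁻¹

@[simp] lemma mul_tau3_tau3 : tau3 * tau3 = 1 := by decide
@[simp] lemma mul_tau3_nu3 : tau3 * nu3 = cs3 := by decide
@[simp] lemma mul_tau3_mu3 : tau3 * mu3 = cyc3 := by decide
@[simp] lemma mul_tau3_cyc3 : tau3 * cyc3 = mu3 := by decide
@[simp] lemma mul_tau3_cs3 : tau3 * cs3 = nu3 := by decide
@[simp] lemma mul_nu3_tau3 : nu3 * tau3 = cyc3 := by decide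
@[simp] lemma mul_nu3_nu3 : nu3 * nu3 = 1 := by decide
@[simp] lemma mul_nu3_mu3 : nu3 * mu3 = cs3 := by decide
@[simp] lemma mul_nu3_cyc3 : nu3 * cyc3 = tau3 := by decide
@[simp] lemma mul_nu3_cs3 : nu3 * cs3 = mu3 := by decide
@[simp] lemma mul_mu3_tau3 : mu3 * tau3 = cs3 := by decide
@[simp] lemma mul_mu3_nu3 : mu3 * nu3 = cyc3 := by decide
@[simp] lemma mul_mu3_mu3 : mu3 * mu3 = 1 := by decide
@[simp] lemma mul_mu3_cyc3 : mu3 * cyc3 = nu3 := by decide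
@[simp] lemma mul_mu3_cs3 : mu3 * cs3 = tau3 := by decide
@[simp] lemma mul_cyc3_tau3 : cyc3 * tau3 = nu3 := by decide
@[simp] lemma mul_cyc3_nu3 : cyc3 * nu3 = mu3 := by decide
@[simp] lemma mul_cyc3_mu3 : cyc3 * mu3 = tau3 := by decide
@[simp] lemma mul_cyc3_cyc3 : cyc3 * cyc3 = cs3 := by decide
@[simp] lemma mul_cyc3_cs3 : cyc3 * cs3 = 1 := by decide
@[simp] lemma mul_cs3_tau3 : cs3 * tau3 = mu3 := by decide
@[simp] lemma mul_cs3_nu3 : cs3 * nu3 = tau3 := by decide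
@[simp] lemma mul_cs3_mu3 : cs3 * mu3 = nu3 := by decide
@[simp] lemma mul_cs3_cyc3 : cs3 * cyc3 = 1 := by decide
@[simp] lemma mul_cs3_cs3 : cs3 * cs3 = cyc3 := by decide
@[simp] lemma inv_tau3 : tau3⁻¹ = tau3 := by decide
@[simp] lemma inv_nu3 : nu3⁻¹ = nu3 := by decide
@[simp] lemma inv_mu3 : mu3⁻¹ = mu3 := by decide
@[simp] lemma inv_cyc3 : cyc3⁻¹ = cs3 := by decide
@[simp] lemma inv_cs3 : cs3⁻¹ = cyc3 := by decide

lemma oA_mul (a b : Equiv.Perm (Fin 3)) : oA a * oA b = oA (a * b) := (map_mul _ _ _).symm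
@[simp] lemma oA_one : oA 1 = 1 := map_one (MonoidAlgebra.of ℝ (Equiv.Perm (Fin 3)))

lemma starA_add (x y) : starA (x + y) = starA x + starA y := congrArg MonoidAlgebra.ofCoeff Finsupp.mapDomain_add
lemma starA_smul (r : ℝ) (x) : starA (r • x) = r • starA x := congrArg MonoidAlgebra.ofCoeff (Finsupp.mapDomain_smul r x.coeff)
lemma starA_sub (x y) : starA (x - y) = starA x - starA y := by
  have h : starA (-y) = - starA y := by
    rw [← neg_one_smul ℝ y, starA_smul, neg_one_smul]
  rw [sub_eq_add_neg, sub_eq_add_neg, starA_add, h]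
lemma starA_oA (σ : Equiv.Perm (Fin 3)) : starA (oA σ) = oA σ⁻¹ := by
  simp [starA, oA, MonoidAlgebra.of_apply, MonoidAlgebra.coeff_single, Finsupp.mapDomain_single]
lemma starA_one : starA (1 : MonoidAlgebra ℝ (Equiv.Perm (Fin 3))) = 1 := by
  have := starA_oA 1; simpa using this

lemma Jel_eq : Jel = ((1:ℝ)/4) • (oA nu3 - oA cyc3 + oA cs3 - oA mu3) := by
  simp only [Jel, Qp, Qm, mul_add, add_mul, mul_sub, sub_mul,
      smul_mul_assoc, mul_smul_comm, smul_smul, one_mul, mul_one, mul_assoc, oA_mul,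
      mul_tau3_tau3, mul_tau3_nu3, mul_tau3_mu3, mul_tau3_cyc3, mul_tau3_cs3,
      mul_nu3_tau3, mul_nu3_nu3, mul_nu3_mu3, mul_nu3_cyc3, mul_nu3_cs3,
      mul_mu3_tau3, mul_mu3_nu3, mul_mu3_mu3, mul_mu3_cyc3, mul_mu3_cs3,
      mul_cyc3_tau3, mul_cyc3_nu3, mul_cyc3_mu3, mul_cyc3_cyc3, mul_cyc3_cs3,
      mul_cs3_tau3, mul_cs3_nu3, mul_cs3_mu3, mul_cs3_cyc3, mul_cs3_cs3,
      oA_one, smul_add, smul_sub,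
      starA_add, starA_sub, starA_smul, starA_oA, starA_one,
      inv_tau3, inv_nu3, inv_mu3, inv_cyc3, inv_cs3]
  module

lemma RRel_eq : RRel = ((1:ℝ)/3) • (oA nu3 + oA cyc3 - oA cs3 - oA mu3) := by
  simp only [RRel, R1el, Qp, Qm, mul_add, add_mul, mul_sub, sub_mul,
      smul_mul_assoc, mul_smul_comm, smul_smul, one_mul, mul_one, mul_assoc, oA_mul,
      mul_tau3_tau3, mul_tau3_nu3, mul_tau3_mu3, mul_tau3_cyc3, mul_tau3_cs3,
      mul_nu3_tau3, mul_nu3_nu3, mul_nu3_mu3, mul_nu3_cyc3, mul_nu3_cs3,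
      mul_mu3_tau3, mul_mu3_nu3, mul_mu3_mu3, mul_mu3_cyc3, mul_mu3_cs3,
      mul_cyc3_tau3, mul_cyc3_nu3, mul_cyc3_mu3, mul_cyc3_cyc3, mul_cyc3_cs3,
      mul_cs3_tau3, mul_cs3_nu3, mul_cs3_mu3, mul_cs3_cyc3, mul_cs3_cs3,
      oA_one, smul_add, smul_sub,
      starA_add, starA_sub, starA_smul, starA_oA, starA_one,
      inv_tau3, inv_nu3, inv_mu3, inv_cyc3, inv_cs3]
  module

lemma QJ_eq : QJ = ((1:ℝ)/3) • (1 + oA tau3)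
    - ((1:ℝ)/6) • (oA nu3 + oA cyc3 + oA cs3 + oA mu3) := by
  rw [QJ, Jel_eq, RRel_eq]
  simp only [mul_add, add_mul, mul_sub, sub_mul,
      smul_mul_assoc, mul_smul_comm, smul_smul, one_mul, mul_one, mul_assoc, oA_mul,
      mul_tau3_tau3, mul_tau3_nu3, mul_tau3_mu3, mul_tau3_cyc3, mul_tau3_cs3,
      mul_nu3_tau3, mul_nu3_nu3, mul_nu3_mu3, mul_nu3_cyc3, mul_nu3_cs3,
      mul_mu3_tau3, mul_mu3_nu3, mul_mu3_mu3, mul_mu3_cyc3, mul_mu3_cs3,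
      mul_cyc3_tau3, mul_cyc3_nu3, mul_cyc3_mu3, mul_cyc3_cyc3, mul_cyc3_cs3,
      mul_cs3_tau3, mul_cs3_nu3, mul_cs3_mu3, mul_cs3_cyc3, mul_cs3_cs3,
      oA_one, smul_add, smul_sub,
      starA_add, starA_sub, starA_smul, starA_oA, starA_one,
      inv_tau3, inv_nu3, inv_mu3, inv_cyc3, inv_cs3]
  module

lemma QR_eq : QR = ((1:ℝ)/3) • (1 - oA tau3)
    + ((1:ℝ)/6) • (oA nu3 - oA cyc3 - oA cs3 + oA mu3) := by
  rw [QR, Jel_eq, RRel_eq]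
  simp only [mul_add, add_mul, mul_sub, sub_mul,
      smul_mul_assoc, mul_smul_comm, smul_smul, one_mul, mul_one, mul_assoc, oA_mul,
      mul_tau3_tau3, mul_tau3_nu3, mul_tau3_mu3, mul_tau3_cyc3, mul_tau3_cs3,
      mul_nu3_tau3, mul_nu3_nu3, mul_nu3_mu3, mul_nu3_cyc3, mul_nu3_cs3,
      mul_mu3_tau3, mul_mu3_nu3, mul_mu3_mu3, mul_mu3_cyc3, mul_mu3_cs3,
      mul_cyc3_tau3, mul_cyc3_nu3, mul_cyc3_mu3, mul_cyc3_cyc3, mul_cyc3_cs3,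
      mul_cs3_tau3, mul_cs3_nu3, mul_cs3_mu3, mul_cs3_cyc3, mul_cs3_cs3,
      oA_one, smul_add, smul_sub,
      starA_add, starA_sub, starA_smul, starA_oA, starA_one,
      inv_tau3, inv_nu3, inv_mu3, inv_cyc3, inv_cs3]
  module

/-- In `ℝ[S₃]`, `Q_J = J·R` and `Q_R = R·J` are self-adjoint idempotents with
`Q_J·Q_R = 0 = Q_R·Q_J`, `Q_J·J = J = J·Q_R`, `Q_R·R = R = R·Q_J`,
`Q_J·C = 0 = C·Q_R`, `Q⁺_τ·Q_J = Q_J = Q_J·Q⁺_τ` and `Q⁻_τ·Q_R = Q_R = Q_R·Q⁻_τ`. -/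
theorem QJ_QR_projections :
    starA QJ = QJ ∧ QJ * QJ = QJ ∧
      starA QR = QR ∧ QR * QR = QR ∧
      QJ * QR = 0 ∧ QR * QJ = 0 ∧
      QJ * Jel = Jel ∧ Jel * QR = Jel ∧
      QR * RRel = RRel ∧ RRel * QJ = RRel ∧
      QJ * Cel = 0 ∧ Cel * QR = 0 ∧
      Qp * QJ = QJ ∧ QJ * Qp = QJ ∧
      Qm * QR = QR ∧ QR * Qm = QR := by
  refine ⟨?_, ?_, ?_, ?_, ?_, ?_, ?_, ?_, ?_, ?_, ?_, ?_, ?_, ?_, ?_, ?_⟩ <;>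
  · simp only [QJ_eq, QR_eq, Jel_eq, RRel_eq, Qp, Qm, Cel, mul_add, add_mul, mul_sub, sub_mul,
      smul_mul_assoc, mul_smul_comm, smul_smul, one_mul, mul_one, mul_assoc, oA_mul,
      mul_tau3_tau3, mul_tau3_nu3, mul_tau3_mu3, mul_tau3_cyc3, mul_tau3_cs3,
      mul_nu3_tau3, mul_nu3_nu3, mul_nu3_mu3, mul_nu3_cyc3, mul_nu3_cs3,
      mul_mu3_tau3, mul_mu3_nu3, mul_mu3_mu3, mul_mu3_cyc3, mul_mu3_cs3,
      mul_cyc3_tau3, mul_cyc3_nu3, mul_cyc3_mu3, mul_cyc3_cyc3, mul_cyc3_cs3,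
      mul_cs3_tau3, mul_cs3_nu3, mul_cs3_mu3, mul_cs3_cyc3, mul_cs3_cs3,
      oA_one, smul_add, smul_sub,
      starA_add, starA_sub, starA_smul, starA_oA, starA_one,
      inv_tau3, inv_nu3, inv_mu3, inv_cyc3, inv_cs3]
    module

end
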